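/- For n ≥ 3, the determinant of the n×n circulant matrix P = circ(P₁, P₂, ..., Pₙ) satisfies det(P) = (P₁ - Pₙ₊₁)^{n-2}(P₁ - 2Pₙ) + Σ_{k=2}^{n-1} P_{k-1} Pₙ^{n-k} (P₁ - Pₙ₊₁)^{k-2}, where Pₖ is the k-th Pell number. -/

import Mathlib

def pell : ℕ → ℚ
  | 0 => 0
  | 1 => 1
  | n + 2 => 2 * pell (n + 1) + pell n

def pellLucas : ℕ → ℚ
  | 0 => 2
  | 1 => 2
  | n + 2 => 2 * pellLucas (n + 1) + pellLucas n

/-- Circulant matrix `circ (c₁, …, cₙ)` with `(i,j)` entry `c ((j - i mod n) + 1)`. -/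
def circMat (n : ℕ) (c : ℕ → ℚ) : Matrix (Fin n) (Fin n) ℚ :=
  fun i j => c ((j - i : Fin n).val + 1)

def Cmat (m : ℕ) (x y : ℚ) (a b : ℕ → ℚ) : Matrix (Fin m) (Fin m) ℚ :=
  Matrix.of fun i j =>
    if i.val + 2 = m then a j.val
    else if i.val + 1 = m then b j.val
    else if j.val = i.val then x else if j.val = i.val + 1 then y else 0

def aF (n : ℕ) : ℕ → ℚ := fun j => if j + 2 = n then 1 else if j + 1 = n then 2 else pell (j + 3)
def bF (n : ℕ) : ℕ → ℚ := fun j => if j + 1 = n then 1 else pell (j + 2)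

def Mmat (n : ℕ) : Matrix (Fin n) (Fin n) ℚ := Matrix.of fun i j =>
  if j.val = i.val then 1 else if i.val + 3 ≤ n ∧ j.val = i.val + 1 then -2
  else if i.val + 3 ≤ n ∧ j.val = i.val + 2 then -1 else 0

lemma Mmat_diag {n : ℕ} (i : Fin n) : Mmat n i i = 1 := by
  simp [Mmat]

lemma sub_val {n : ℕ} (a b : Fin n) : (a - b).val = (n - b.val + a.val) % n := by
  rw [Fin.sub_def]

lemma mod_helper (p n : ℕ) (h : p < 2*n) : p % n = if p < n then p else p - n := by
  split_ifs with hp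
  · exact Nat.mod_eq_of_lt hp
  · push_neg at hp
    rw [Nat.mod_eq_sub_mod hp, Nat.mod_eq_of_lt (by omega)]

lemma det_Mmat (n : ℕ) : (Mmat n).det = 1 := by
  rw [Matrix.det_of_upperTriangular]
  · rw [Finset.prod_congr rfl (fun i _ => Mmat_diag i), Finset.prod_const, one_pow]
  · intro i j hij
    have hij' : j.val < i.val := hij
    simp only [Mmat, Matrix.of_apply]
    rw [if_neg (by omega), if_neg (by rintro ⟨-, h⟩; omega), if_neg (by rintro ⟨-, h⟩; omega)]

lemma pell2 : pell 2 = 2 := by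
  show 2 * pell 1 + pell 0 = 2
  simp [pell]

lemma pell_rec (s : ℕ) : pell (s + 2) = 2 * pell (s + 1) + pell s := rfl

lemma Mmul (k : ℕ) :
    Mmat (k+3) * circMat (k+3) pell
      = Cmat (k+3) (1 - pell (k+4)) (-pell (k+3)) (aF (k+3)) (bF (k+3)) := by
  ext i j
  rw [Matrix.mul_apply]
  have hcirc : ∀ p q : Fin (k+3), circMat (k+3) pell p q = pell ((q - p).val + 1) := fun _ _ => rfl
  by_cases hi : i.val + 3 ≤ k + 3
  · -- bidiagonal rows
    have hi' : i.val ≤ k := by omega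
    have hk1 : (i+1 : Fin (k+3)).val = i.val + 1 := by
      rw [Fin.add_def]; simp only [Fin.val_one]; exact Nat.mod_eq_of_lt (by omega)
    have hk2 : (i+1+1 : Fin (k+3)).val = i.val + 2 := by
      rw [Fin.add_def]; rw [hk1]; simp only [Fin.val_one]; exact Nat.mod_eq_of_lt (by omega)
    rw [← Finset.sum_subset (Finset.subset_univ ({i, i+1, i+1+1} : Finset (Fin (k+3))))]
    · rw [Finset.sum_insert (by simp [Fin.ext_iff, hk1, hk2]),
        Finset.sum_insert (by simp [Fin.ext_iff, hk1, hk2]), Finset.sum_singleton]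
      have e2 : Mmat (k+3) i (i+1) = -2 := by
        simp only [Mmat, Matrix.of_apply, hk1]
        rw [if_neg (by omega), if_pos (And.intro hi trivial)]
      have e3 : Mmat (k+3) i (i+1+1) = -1 := by
        simp only [Mmat, Matrix.of_apply, hk2]
        rw [if_neg (by omega), if_neg (by rintro ⟨-, h⟩; omega), if_pos (And.intro hi trivial)]
      rw [Mmat_diag, e2, e3, hcirc, hcirc, hcirc]
      have hd1 : (j - (i+1)) = (j - i) - 1 := by abel
      have hd2 : (j - (i+1+1)) = (j - i) - 1 - 1 := by abel
      have ht : (j - i).val < k + 3 := (j - i).isLt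
      have hv1 : ((j - i) - 1 : Fin (k+3)).val
          = if (j - i).val = 0 then k+2 else (j - i).val - 1 := by
        rw [sub_val, Fin.val_one, mod_helper _ _ (by omega)]
        split_ifs <;> omega
      have hv2 : ((j - i) - 1 - 1 : Fin (k+3)).val
          = if (j - i).val = 0 then k+1 else if (j - i).val = 1 then k+2 else (j - i).val - 2 := by
        rw [sub_val, Fin.val_one, hv1, mod_helper _ _ (by split_ifs <;> omega)]
        split_ifs <;> omega
      have hj : j.val = if (j - i).val + i.val < k + 3 then (j - i).val + i.val
          else (j - i).val + i.val - (k+3) := by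
        have hj0 : j.val = ((j - i).val + i.val) % (k+3) := by
          conv_lhs => rw [show j = (j - i) + i by abel, Fin.add_def]
        rw [mod_helper _ _ (by omega)] at hj0
        exact hj0
      have hCm : Cmat (k+3) (1 - pell (k+4)) (-pell (k+3)) (aF (k+3)) (bF (k+3)) i j
          = if j.val = i.val then 1 - pell (k+4) else if j.val = i.val + 1 then -pell (k+3) else 0 := by
        simp only [Cmat, Matrix.of_apply]
        rw [if_neg (by omega), if_neg (by omega)]
      rw [hd1, hd2, hv1, hv2, hCm]
      by_cases ht0 : (j - i).val = 0
      · have hj' : j.val = i.val := by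
          rw [ht0, if_pos (by omega)] at hj; omega
        rw [ht0, if_pos rfl, if_pos rfl, if_pos hj']
        rw [show pell (k+4) = 2 * pell (k+3) + pell (k+2) from rfl,
          show (0:ℕ)+1 = 1 from rfl, show k+2+1 = k+3 from rfl, show k+1+1 = k+2 from rfl]
        show 1 * pell 1 + (-2 * pell (k+3) + -1 * pell (k+2)) = _
        rw [show pell 1 = 1 from rfl]; ring
      · by_cases ht1 : (j - i).val = 1
        · have hj' : j.val = i.val + 1 := by
            rw [ht1, if_pos (by omega)] at hj; omega
          rw [ht1, if_neg (by omega), if_neg (by omega), if_pos rfl,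
            if_neg (by omega), if_pos hj']
          rw [show (1:ℕ)+1 = 2 from rfl, show (1:ℕ)-1+1 = 1 from rfl, show k+2+1 = k+3 from rfl]
          rw [pell2, show pell 1 = 1 from rfl]; ring
        · obtain ⟨s, hs⟩ : ∃ s, (j - i).val = s + 2 := ⟨(j - i).val - 2, by omega⟩
          rw [hs] at hj ⊢
          rw [if_neg (by omega), if_neg (by omega), if_neg (by omega),
            if_neg (by split_ifs at hj <;> omega), if_neg (by split_ifs at hj <;> omega)]
          rw [show s+2-1 = s+1 by omega, show s+2-2 = s by omega, show s+2+1 = s+1+2 from rfl,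
            show s+1+1 = s+2 from rfl, pell_rec (s+1)]
          ring
    · intro p _ hp
      simp only [Finset.mem_insert, Finset.mem_singleton] at hp
      push_neg at hp
      obtain ⟨h0, h1, h2⟩ := hp
      have h0' : p.val ≠ i.val := fun h => h0 (Fin.ext h)
      have h1' : p.val ≠ i.val + 1 := fun h => h1 (Fin.ext (by rw [h, hk1]))
      have h2' : p.val ≠ i.val + 2 := fun h => h2 (Fin.ext (by rw [h, hk2]))
      have : Mmat (k+3) i p = 0 := by
        simp only [Mmat, Matrix.of_apply]
        rw [if_neg h0', if_neg (by rintro ⟨-, h⟩; omega), if_neg (by rintro ⟨-, h⟩; omega)]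
      rw [this, zero_mul]
  · -- last two rows
    rw [Finset.sum_eq_single i]
    · rw [Mmat_diag, hcirc, one_mul, sub_val]
      rcases (show i.val = k+1 ∨ i.val = k+2 by have := i.isLt; omega) with hiv | hiv
      · rw [show k + 3 - i.val = 2 by omega, mod_helper _ _ (by omega)]
        have hCm : Cmat (k+3) (1 - pell (k+4)) (-pell (k+3)) (aF (k+3)) (bF (k+3)) i j
            = aF (k+3) j.val := by
          simp only [Cmat, Matrix.of_apply]; rw [if_pos (by omega)]
        rw [hCm]
        have hjv := j.isLt
        simp only [aF]
        by_cases hj1 : j.val ≤ k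
        · rw [if_pos (by omega), if_neg (by omega), if_neg (by omega)]
          congr 1; omega
        · rcases (show j.val = k+1 ∨ j.val = k+2 by omega) with hj2 | hj2
          · rw [if_neg (by omega), if_pos (by omega), hj2,
              show 2+(k+1)-(k+3) = 0 by omega, show (0:ℕ)+1 = 1 from rfl]
            rfl
          · rw [if_neg (by omega), if_neg (by omega), if_pos (by omega), hj2,
              show 2+(k+2)-(k+3) = 1 by omega, show (1:ℕ)+1 = 2 from rfl, pell2]
      · rw [show k + 3 - i.val = 1 by omega, mod_helper _ _ (by omega)]
        have hCm : Cmat (k+3) (1 - pell (k+4)) (-pell (k+3)) (aF (k+3)) (bF (k+3)) i j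
            = bF (k+3) j.val := by
          simp only [Cmat, Matrix.of_apply]; rw [if_neg (by omega), if_pos (by omega)]
        rw [hCm]
        have hjv := j.isLt
        simp only [bF]
        by_cases hj1 : j.val ≤ k + 1
        · rw [if_pos (by omega), if_neg (by omega)]
          congr 1; omega
        · rw [if_neg (by omega), if_pos (by omega),
            show 1 + j.val - (k+3) = 0 by omega, show (0:ℕ)+1 = 1 from rfl]
          rfl
    · intro p _ hp
      have hp' : p.val ≠ i.val := fun h => hp (Fin.ext h)
      have : Mmat (k+3) i p = 0 := by
        simp only [Mmat, Matrix.of_apply]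
        rw [if_neg hp', if_neg (by rintro ⟨h, -⟩; omega), if_neg (by rintro ⟨h, -⟩; omega)]
      rw [this, zero_mul]
    · intro h; exact absurd (Finset.mem_univ i) h

def Fm (m : ℕ) (x y : ℚ) (a b : ℕ → ℚ) : ℚ :=
  x ^ m * (a m * b (m + 1) - a (m + 1) * b m) +
    ∑ j ∈ Finset.range m,
      x ^ j * y ^ (m - j) * (-1 : ℚ) ^ (m + j) * (a j * b (m + 1) - b j * a (m + 1))


lemma succAbove_val {n : ℕ} (i : Fin (n+1)) (r : Fin n) :
    (i.succAbove r).val = if r.val < i.val then r.val else r.val + 1 := by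
  rw [Fin.succAbove]
  split
  · next h => rw [Fin.lt_def] at h; simp only [Fin.coe_castSucc] at h ⊢; rw [if_pos h]
  · next h => rw [Fin.lt_def] at h; push_neg at h; simp only [Fin.coe_castSucc] at h ⊢
              rw [if_neg (by omega)]; simp

lemma submatrix_zero (m : ℕ) (x y : ℚ) (a b : ℕ → ℚ) :
    (Cmat (m + 3) x y a b).submatrix ((0 : Fin (m+3)).succAbove) Fin.succ
      = Cmat (m + 2) x y (fun j => a (j+1)) (fun j => b (j+1)) := by
  ext i j
  simp only [Cmat, Matrix.submatrix_apply, Matrix.of_apply, Fin.succAbove_zero, Fin.val_succ]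
  split_ifs <;> first | rfl | omega

lemma minor_tri (m : ℕ) (x y : ℚ) (a b : ℕ → ℚ) (i : Fin (m+3)) (hi : m + 1 ≤ i.val) :
    ((Cmat (m + 3) x y a b).submatrix i.succAbove Fin.succ).det
      = y ^ (m+1) * (if i.val = m + 1 then b (m+2) else a (m+2)) := by
  rw [Matrix.det_of_lowerTriangular]
  · rw [Fin.prod_univ_castSucc]
    have h1 : ∀ r : Fin (m+1),
        ((Cmat (m + 3) x y a b).submatrix i.succAbove Fin.succ) r.castSucc r.castSucc = y := by
      intro r
      simp only [Matrix.submatrix_apply, Cmat, Matrix.of_apply, succAbove_val, Fin.val_succ,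
        Fin.coe_castSucc]
      have hr : r.val < m + 1 := r.isLt
      split_ifs <;> first | rfl | omega
    rw [Finset.prod_congr rfl (fun r _ => h1 r), Finset.prod_const, Finset.card_univ,
      Fintype.card_fin]
    congr 1
    simp only [Matrix.submatrix_apply, Cmat, Matrix.of_apply, succAbove_val, Fin.val_succ,
      Fin.val_last]
    have hi2 : i.val ≤ m + 2 := by omega
    split_ifs <;> first | rfl | omega
  · intro r c hrc
    have hrc' : r.val < c.val := hrc
    simp only [Matrix.submatrix_apply, Cmat, Matrix.of_apply, succAbove_val, Fin.val_succ]
    have hc : c.val < m + 2 := c.isLt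
    split_ifs <;> first | rfl | omega

lemma Fm_succ (m : ℕ) (x y : ℚ) (a b : ℕ → ℚ) :
    Fm (m+1) x y a b =
      x * Fm m x y (fun j => a (j+1)) (fun j => b (j+1)) +
        (-1:ℚ)^(m+1) * y^(m+1) * (a 0 * b (m+2) - b 0 * a (m+2)) := by
  unfold Fm
  simp only [show m+1+1 = m+2 from rfl]
  rw [Finset.sum_range_succ' (fun j => x ^ j * y ^ (m + 1 - j) * (-1:ℚ) ^ (m + 1 + j)
    * (a j * b (m + 2) - b j * a (m + 2))) m]
  rw [mul_add, Finset.mul_sum]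
  have hterm : ∀ j ∈ Finset.range m,
      x * (x ^ j * y ^ (m - j) * (-1:ℚ) ^ (m + j) *
        (a (j+1) * b (m + 2) - b (j+1) * a (m + 2))) =
      x ^ (j+1) * y ^ (m + 1 - (j+1)) * (-1:ℚ) ^ (m + 1 + (j+1))
        * (a (j+1) * b (m + 2) - b (j+1) * a (m + 2)) := by
    intro j hj
    have h1 : m + 1 - (j + 1) = m - j := by omega
    have h2 : (-1:ℚ) ^ (m + 1 + (j+1)) = (-1:ℚ) ^ (m + j) := by
      rw [show m + 1 + (j+1) = m + j + 2 by omega, pow_succ, pow_succ]; ring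
    rw [h1, h2]; ring
  rw [Finset.sum_congr rfl hterm]
  simp only [pow_zero, Nat.sub_zero, Nat.add_zero, one_mul]
  ring

lemma det_Cmat (x y : ℚ) : ∀ (m : ℕ) (a b : ℕ → ℚ),
    (Cmat (m + 2) x y a b).det = Fm m x y a b := by
  intro m
  induction m with
  | zero =>
    intro a b
    rw [show (0:ℕ)+2 = 1+1 from rfl, Matrix.det_fin_two]
    simp [Cmat, Fm]
  | succ m ih =>
    intro a b
    rw [show m+1+2 = (m+2)+1 from rfl, Matrix.det_succ_column_zero]
    have i1 : Fin (m+3) := ⟨m+1, by omega⟩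
    rw [← Finset.sum_subset
      (Finset.subset_univ ({(0 : Fin (m+3)), ⟨m+1, by omega⟩, ⟨m+2, by omega⟩} : Finset (Fin (m+3))))]
    · rw [Finset.sum_insert (by simp [Fin.ext_iff]),
        Finset.sum_insert (by simp [Fin.ext_iff]), Finset.sum_singleton]
      rw [submatrix_zero, ih,
        minor_tri m x y a b ⟨m+1, by omega⟩ (by simp),
        minor_tri m x y a b ⟨m+2, by omega⟩ (by simp),
        if_pos (by simp), if_neg (by simp)]
      have hA0 : Cmat (m+3) x y a b 0 (0 : Fin (m+3)) = x := by
        simp only [Cmat, Matrix.of_apply, Fin.val_zero]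
        split_ifs <;> first | rfl | omega | tauto
      have hA1 : Cmat (m+3) x y a b ⟨m+1, by omega⟩ (0 : Fin (m+3)) = a 0 := by
        simp only [Cmat, Matrix.of_apply, Fin.val_zero, Fin.val_mk]
        split_ifs <;> first | rfl | omega | tauto
      have hA2 : Cmat (m+3) x y a b ⟨m+2, by omega⟩ (0 : Fin (m+3)) = b 0 := by
        simp only [Cmat, Matrix.of_apply, Fin.val_zero, Fin.val_mk]
        split_ifs <;> first | rfl | omega | tauto
      rw [hA0, hA1, hA2, Fm_succ]
      simp only [Fin.val_zero, Fin.val_mk, pow_zero]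
      ring
    · intro i _ hi
      simp only [Finset.mem_insert, Finset.mem_singleton] at hi
      push_neg at hi
      obtain ⟨h0, h1, h2⟩ := hi
      have h0' : i.val ≠ 0 := fun h => h0 (Fin.ext h)
      have h1' : i.val ≠ m+1 := fun h => h1 (Fin.ext h)
      have h2' : i.val ≠ m+2 := fun h => h2 (Fin.ext h)
      have : Cmat (m+3) x y a b i 0 = 0 := by
        simp only [Cmat, Matrix.of_apply, Fin.val_zero]
        split_ifs <;> first | rfl | omega | tauto
      rw [this]; ring

theorem det_circ_pell (n : ℕ) (hn : 3 ≤ n) :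
    (circMat n pell).det =
      (pell 1 - pell (n + 1)) ^ (n - 2) * (pell 1 - 2 * pell n) +
        ∑ k ∈ Finset.Icc 2 (n - 1),
          pell (k - 1) * pell n ^ (n - k) * (pell 1 - pell (n + 1)) ^ (k - 2) := by
  obtain ⟨k, rfl⟩ : ∃ k, n = k + 3 := ⟨n - 3, by omega⟩
  have h1 : (circMat (k+3) pell).det
      = (Cmat (k+3) (1 - pell (k+4)) (-pell (k+3)) (aF (k+3)) (bF (k+3))).det := by
    rw [← Mmul, Matrix.det_mul, det_Mmat, one_mul]
  rw [h1,
    show (Cmat (k+3) (1 - pell (k+4)) (-pell (k+3)) (aF (k+3)) (bF (k+3))).det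
      = Fm (k+1) (1 - pell (k+4)) (-pell (k+3)) (aF (k+3)) (bF (k+3)) from
        det_Cmat _ _ (k+1) _ _]
  unfold Fm
  rw [show k+1+1 = k+2 from rfl, show k+3-2 = k+1 by omega, show k+3-1 = k+2 by omega,
    show k+3+1 = k+4 from rfl, show pell 1 = 1 from rfl]
  have ha1 : aF (k+3) (k+1) = 1 := by unfold aF; rw [if_pos (by omega)]
  have ha2 : aF (k+3) (k+2) = 2 := by unfold aF; rw [if_neg (by omega), if_pos (by omega)]
  have hb2 : bF (k+3) (k+2) = 1 := by unfold bF; rw [if_pos (by omega)]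
  have hb1 : bF (k+3) (k+1) = pell (k+3) := by unfold bF; rw [if_neg (by omega)]
  rw [ha1, ha2, hb1, hb2]
  rw [← Finset.Ico_add_one_right_eq_Icc, Finset.sum_Ico_eq_sum_range,
    show k+2+1-2 = k+1 by omega]
  congr 1
  · ring
  · apply Finset.sum_congr rfl
    intro j hj
    rw [Finset.mem_range] at hj
    have haj : aF (k+3) j = pell (j+3) := by
      unfold aF; rw [if_neg (by omega), if_neg (by omega)]
    have hbj : bF (k+3) j = pell (j+2) := by
      unfold bF; rw [if_neg (by omega)]
    rw [haj, hbj,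
      show 2+j-1 = j+1 by omega, show k+3-(2+j) = k+1-j by omega, show 2+j-2 = j by omega]
    rw [show ((-pell (k+3)) : ℚ)^(k+1-j) = (-1)^(k+1-j) * pell (k+3)^(k+1-j) by
      rw [neg_pow]]
    have hsgn : ((-1:ℚ))^(k+1-j) * ((-1:ℚ))^(k+1+j) = 1 := by
      rw [← pow_add, show k+1-j + (k+1+j) = 2*(k+1) by omega, pow_mul, neg_one_sq, one_pow]
    have hrec : pell (j+3) = 2 * pell (j+2) + pell (j+1) := rfl
    calc (1 - pell (k + 4))^j * ((-1:ℚ)^(k+1-j) * pell (k+3)^(k+1-j)) * (-1:ℚ)^(k+1+j)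
          * (pell (j+3) * 1 - pell (j+2) * 2)
        = ((-1:ℚ)^(k+1-j) * (-1:ℚ)^(k+1+j)) * ((1 - pell (k + 4))^j * pell (k+3)^(k+1-j)
            * (pell (j+3) - 2 * pell (j+2))) := by ring
      _ = pell (j+1) * pell (k+3)^(k+1-j) * (1 - pell (k+4))^j := by
          rw [hsgn, hrec]; ring
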